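/- For all non-negative integers n and p, Σ_{k=1}^{n+1} k^p = (1/n!) · Σ_{j=0}^{n} (j!)^2 · {p+1, j+1} · ( Σ_{k=j}^{n} [n+1, k+1] · {k+1, j+1} ), where [n+1, k+1] is the unsigned Stirling number of the first kind and {m, r} denotes Stirling numbers of the second kind. The identity is an equality of rational numbers. -/

import Mathlib

/-- Unsigned Stirling numbers of the first kind. -/
def stirlingFirst : ℕ → ℕ → ℕ
  | 0, 0 => 1
  | 0, _ + 1 => 0
  | _ + 1, 0 => 0
  | n + 1, k + 1 => n * stirlingFirst n (k + 1) + stirlingFirst n k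

/-- Stirling numbers of the second kind. -/
def stirlingSecond : ℕ → ℕ → ℕ
  | 0, 0 => 1
  | 0, _ + 1 => 0
  | _ + 1, 0 => 0
  | n + 1, k + 1 => (k + 1) * stirlingSecond n (k + 1) + stirlingSecond n k

lemma sS_zero : ∀ n, stirlingSecond (n+1) 0 = 0 := fun n => rfl
lemma sS_succ (n k : ℕ) : stirlingSecond (n+1) (k+1) = (k+1) * stirlingSecond n (k+1) + stirlingSecond n k := rfl
lemma sF_succ (n k : ℕ) : stirlingFirst (n+1) (k+1) = n * stirlingFirst n (k+1) + stirlingFirst n k := rfl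

lemma sS_eq_zero : ∀ n k, n < k → stirlingSecond n k = 0 := by
  intro n
  induction n with
  | zero => intro k h; cases k with | zero => omega | succ k => rfl
  | succ n ih =>
    intro k h
    cases k with
    | zero => omega
    | succ k => rw [sS_succ, ih _ (by omega), ih _ (by omega)]; simp

lemma sF_eq_zero : ∀ n k, n < k → stirlingFirst n k = 0 := by
  intro n
  induction n with
  | zero => intro k h; cases k with | zero => omega | succ k => rfl
  | succ n ih =>
    intro k h
    cases k with
    | zero => omega
    | succ k => rw [sF_succ, ih _ (by omega), ih _ (by omega)]; simp

lemma sF_zero (n : ℕ) : stirlingFirst (n+1) 0 = 0 := rfl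

open Finset in
lemma pow_eq (q m : ℕ) : m ^ q = ∑ i ∈ range (q+1), stirlingSecond q i * m.descFactorial i := by
  induction q with
  | zero => simp [stirlingSecond]
  | succ q ih =>
    have key : ∀ i, m * m.descFactorial i = m.descFactorial (i+1) + i * m.descFactorial i := by
      intro i
      rw [Nat.descFactorial_succ]
      rcases le_or_gt i m with h | h
      · have : m - i + i = m := Nat.sub_add_cancel h
        nlinarith [this]
      · rw [Nat.descFactorial_eq_zero_iff_lt.2 h]; simp
    have h1 : m ^ (q+1) = ∑ i ∈ range (q+1), stirlingSecond q i * (m.descFactorial (i+1) + i * m.descFactorial i) := by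
      simp_rw [← key, pow_succ, ih, Finset.sum_mul]
      exact Finset.sum_congr rfl fun i _ => by ring
    rw [h1]
    rw [Finset.sum_range_succ' (fun i => stirlingSecond (q+1) i * m.descFactorial i) (q+1)]
    simp only [sS_succ, Nat.mul_zero, Nat.add_zero]
    have h2 : stirlingSecond (q+1) 0 * m.descFactorial 0 = 0 := by simp [sS_zero]
    rw [h2, Nat.add_zero]
    rw [Finset.sum_congr rfl (fun i _ => Nat.add_mul ((i+1) * stirlingSecond q (i+1)) (stirlingSecond q i) (m.descFactorial (i+1)))]
    rw [Finset.sum_add_distrib]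
    simp_rw [Nat.mul_add]
    rw [Finset.sum_add_distrib]
    have h3 : ∑ x ∈ range (q+1), stirlingSecond q x * (x * m.descFactorial x)
        = ∑ x ∈ range (q+1), stirlingSecond q (x+1) * ((x+1) * m.descFactorial (x+1)) := by
      have e1 := Finset.sum_range_succ (fun i => stirlingSecond q i * (i * m.descFactorial i)) (q+1)
      have e2 := Finset.sum_range_succ' (fun i => stirlingSecond q i * (i * m.descFactorial i)) (q+1)
      rw [sS_eq_zero q (q+1) (by omega), zero_mul] at e1
      simp only [Nat.zero_mul, Nat.mul_zero, zero_mul, mul_zero, add_zero] at e1 e2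
      rw [← e1, e2]
    have h4 : ∑ x ∈ range (q+1), (x+1) * stirlingSecond q (x+1) * m.descFactorial (x+1)
        = ∑ x ∈ range (q+1), stirlingSecond q (x+1) * ((x+1) * m.descFactorial (x+1)) :=
      Finset.sum_congr rfl fun i _ => by ring
    rw [h4, ← h3]
    exact add_comm _ _

open Finset in
lemma pow_eq' (p m : ℕ) : (m+1) ^ p = ∑ j ∈ range (p+1), stirlingSecond (p+1) (j+1) * m.descFactorial j := by
  have h := pow_eq (p+1) (m+1)
  rw [Finset.sum_range_succ' (fun i => stirlingSecond (p+1) i * (m+1).descFactorial i) (p+1)] at h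
  simp only [sS_zero, Nat.zero_mul, zero_mul, Nat.add_zero, add_zero,
    Nat.succ_descFactorial_succ] at h
  have h2 : (m+1) ^ (p+1) = (m+1) * ∑ j ∈ range (p+1), stirlingSecond (p+1) (j+1) * m.descFactorial j := by
    rw [h, Finset.mul_sum]
    exact Finset.sum_congr rfl fun i _ => by ring
  rw [pow_succ'] at h2
  exact Nat.eq_of_mul_eq_mul_left (Nat.succ_pos m) h2

open Finset in
lemma hockey (n j : ℕ) : ∑ m ∈ range (n+1), Nat.choose m j = Nat.choose (n+1) (j+1) := by
  rw [← Nat.sum_Icc_choose]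
  have hsub : Finset.Icc j n ⊆ range (n+1) := by
    intro x hx; simp only [Finset.mem_Icc, Finset.mem_range] at *; omega
  rw [← Finset.sum_subset hsub]
  intro x hx hx2
  simp only [Finset.mem_range, Finset.mem_Icc, not_and, not_le] at hx hx2
  have : x < j := by
    by_cases hj : j ≤ x
    · exact absurd (hx2 hj) (by omega)
    · omega
  exact Nat.choose_eq_zero_of_lt this

open Finset in
lemma lhs_eq (n p : ℕ) : ∑ k ∈ Icc 1 (n+1), k ^ p
    = ∑ j ∈ range (p+1), stirlingSecond (p+1) (j+1) * (Nat.factorial j * Nat.choose (n+1) (j+1)) := by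
  have h0 : ∑ k ∈ Icc 1 (n+1), k ^ p = ∑ m ∈ range (n+1), (m+1) ^ p := by
    rw [← Finset.Ico_add_one_right_eq_Icc, Finset.sum_Ico_eq_sum_range]
    norm_num
    exact Finset.sum_congr rfl fun i _ => by rw [Nat.add_comm]
  rw [h0]
  simp_rw [pow_eq']
  rw [Finset.sum_comm]
  refine Finset.sum_congr rfl fun j _ => ?_
  rw [← Finset.mul_sum]
  congr 1
  simp_rw [Nat.descFactorial_eq_factorial_mul_choose]
  rw [← Finset.mul_sum, hockey]

lemma sS_one : ∀ m, stirlingSecond (m+1) 1 = 1 := by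
  intro m
  induction m with
  | zero => rfl
  | succ m ih => show 1 * stirlingSecond (m+1) 1 + stirlingSecond (m+1) 0 = 1; rw [ih, sS_zero]

open Finset in
lemma sum_sF : ∀ m, ∑ k ∈ range (m+1), stirlingFirst m k = Nat.factorial m := by
  intro m
  induction m with
  | zero => simp [stirlingFirst]
  | succ m ih =>
    have e2 := Finset.sum_range_succ' (fun k => stirlingFirst m k) (m+1)
    have e3 := Finset.sum_range_succ (fun k => stirlingFirst m k) (m+1)
    rw [sF_eq_zero m (m+1) (by omega), add_zero, ih] at e3
    rw [Finset.sum_range_succ' (fun k => stirlingFirst (m+1) k) (m+1)]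
    simp only [sF_succ, sF_zero, add_zero]
    rw [Finset.sum_add_distrib, ← Finset.mul_sum, ih]
    have key : (∑ k ∈ range (m+1), stirlingFirst m (k+1)) + stirlingFirst m 0 = Nat.factorial m := by
      rw [← e2, e3]
    have hm0 : m * stirlingFirst m 0 = 0 := by
      cases m with
      | zero => simp
      | succ m => rw [sF_zero]; simp
    have hmul : m * ∑ k ∈ range (m+1), stirlingFirst m (k+1) = m * Nat.factorial m := by
      rw [← key, Nat.mul_add, hm0, add_zero]
    rw [hmul, Nat.factorial_succ]
    ring

lemma binom_step (n j : ℕ) : (n+j+3) * Nat.choose n (j+1) + (j+2) * Nat.choose n j = (n+2) * Nat.choose (n+1) (j+1) := by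
  rcases le_or_gt n j with h | h
  · rcases eq_or_lt_of_le h with rfl | h2
    · simp [Nat.choose_self, Nat.choose_succ_self]
    · rw [Nat.choose_eq_zero_of_lt h2, Nat.choose_eq_zero_of_lt (by omega),
        Nat.choose_eq_zero_of_lt (by omega)]
      simp
  · have hc := Nat.choose_succ_right_eq n j
    have h1 : ((Nat.choose n (j+1) : ℚ)) * (j+1) = (Nat.choose n j : ℚ) * ((n:ℚ) - j) := by
      have h2 : ((Nat.choose n (j+1) * (j+1) : ℕ) : ℚ) = ((Nat.choose n j * (n - j) : ℕ) : ℚ) := by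
        exact_mod_cast congrArg (Nat.cast (R := ℚ)) hc
      push_cast [Nat.cast_sub h.le] at h2
      exact h2
    rw [Nat.choose_succ_succ]
    qify
    linear_combination h1

open Finset in
lemma lah : ∀ n j, (∑ k ∈ Icc j n, stirlingFirst (n+1) (k+1) * stirlingSecond (k+1) (j+1)) * Nat.factorial (j+1) = Nat.choose n j * Nat.factorial (n+1) := by
  intro n
  induction n with
  | zero =>
    intro j
    cases j with
    | zero => decide
    | succ j =>
      rw [Finset.Icc_eq_empty (by omega), Finset.sum_empty,
        Nat.choose_eq_zero_of_lt (by omega)]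
      simp
  | succ n ih =>
    intro j
    by_cases hjn : j ≤ n + 1
    case neg =>
      rw [Finset.Icc_eq_empty (by omega), Finset.sum_empty,
        Nat.choose_eq_zero_of_lt (by omega)]
      simp
    have hsplit : ∑ k ∈ Icc j (n+1), stirlingFirst (n+2) (k+1) * stirlingSecond (k+1) (j+1)
        = (n+1) * (∑ k ∈ Icc j (n+1), stirlingFirst (n+1) (k+1) * stirlingSecond (k+1) (j+1))
          + ∑ k ∈ Icc j (n+1), stirlingFirst (n+1) k * stirlingSecond (k+1) (j+1) := by
      rw [Finset.mul_sum, ← Finset.sum_add_distrib]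
      exact Finset.sum_congr rfl fun k _ => by rw [sF_succ]; ring
    have hA : ∑ k ∈ Icc j (n+1), stirlingFirst (n+1) (k+1) * stirlingSecond (k+1) (j+1)
        = ∑ k ∈ Icc j n, stirlingFirst (n+1) (k+1) * stirlingSecond (k+1) (j+1) := by
      rw [← Finset.Ico_add_one_right_eq_Icc, Finset.sum_Ico_succ_top (by omega), Finset.Ico_add_one_right_eq_Icc,
        sF_eq_zero (n+1) (n+2) (by omega)]
      simp
    cases j with
    | zero =>
      have hB : ∑ k ∈ Icc 0 (n+1), stirlingFirst (n+1) k * stirlingSecond (k+1) 1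
          = Nat.factorial (n+1) := by
        simp_rw [sS_one, Nat.mul_one]
        rw [← Finset.Ico_add_one_right_eq_Icc, Nat.Ico_zero_eq_range, sum_sF]
      rw [hsplit, hA, hB]
      have ih0 := ih 0
      norm_num at ih0 ⊢
      rw [ih0, Nat.factorial_succ (n+1)]
      ring
    | succ j =>
      have hB : ∑ k ∈ Icc (j+1) (n+1), stirlingFirst (n+1) k * stirlingSecond (k+1) (j+2)
          = ∑ i ∈ Icc j n, stirlingFirst (n+1) (i+1) * stirlingSecond (i+2) (j+2) := by
        rw [← Finset.Ico_add_one_right_eq_Icc, ← Finset.Ico_add_one_right_eq_Icc, Finset.sum_Ico_eq_sum_range,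
          Finset.sum_Ico_eq_sum_range]
        have hn : n + 1 + 1 - (j+1) = n + 1 - j := by omega
        rw [hn]
        refine Finset.sum_congr rfl fun i _ => ?_
        have h1 : j + 1 + i = j + i + 1 := by omega
        rw [h1]
      have hBexp : ∑ i ∈ Icc j n, stirlingFirst (n+1) (i+1) * stirlingSecond (i+2) (j+2)
          = (j+2) * (∑ i ∈ Icc j n, stirlingFirst (n+1) (i+1) * stirlingSecond (i+1) (j+2))
            + ∑ i ∈ Icc j n, stirlingFirst (n+1) (i+1) * stirlingSecond (i+1) (j+1) := by
        rw [Finset.mul_sum, ← Finset.sum_add_distrib]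
        exact Finset.sum_congr rfl fun i _ => by rw [sS_succ]; ring
      have hC : ∑ i ∈ Icc j n, stirlingFirst (n+1) (i+1) * stirlingSecond (i+1) (j+2)
          = ∑ i ∈ Icc (j+1) n, stirlingFirst (n+1) (i+1) * stirlingSecond (i+1) (j+2) := by
        refine (Finset.sum_subset (fun x hx => by simp only [Finset.mem_Icc] at *; omega) ?_).symm
        intro x hx hx2
        simp only [Finset.mem_Icc, not_and, not_le] at hx hx2
        have hxj : x = j := by omega
        rw [hxj, sS_eq_zero (j+1) (j+2) (by omega), Nat.mul_zero]
      rw [hsplit, hA, hB, hBexp, hC]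
      have ih1 := ih (j+1)
      have ih2 := ih j
      have hF2 : Nat.factorial (j+2) = (j+2) * Nat.factorial (j+1) := Nat.factorial_succ (j+1)
      have hFn : Nat.factorial (n+2) = (n+2) * Nat.factorial (n+1) := Nat.factorial_succ (n+1)
      have hbin := binom_step n j
      rw [hF2] at ih1
      rw [hFn, hF2]
      qify at ih1 ih2 hbin ⊢
      linear_combination ((n:ℚ)+j+3) * ih1 + ((j:ℚ)+2) * ih2 + (Nat.factorial (n+1) : ℚ) * hbin

theorem sum_powers_eq_double_stirling_sum (n p : ℕ) :
    (∑ k ∈ Finset.Icc 1 (n + 1), (k : ℚ) ^ p) =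
      (1 / (Nat.factorial n : ℚ)) *
        ∑ j ∈ Finset.range (n + 1),
          (Nat.factorial j : ℚ) ^ 2 * (stirlingSecond (p + 1) (j + 1) : ℚ) *
            (∑ k ∈ Finset.Icc j n, (stirlingFirst (n + 1) (k + 1) : ℚ) *
              (stirlingSecond (k + 1) (j + 1) : ℚ)) := by
  have hn0 : (Nat.factorial n : ℚ) ≠ 0 := Nat.cast_ne_zero.2 (Nat.factorial_ne_zero n)
  -- LHS
  have hL : (∑ k ∈ Finset.Icc 1 (n + 1), (k : ℚ) ^ p)
      = ∑ j ∈ Finset.range (p+1), (stirlingSecond (p+1) (j+1) : ℚ) *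
          ((Nat.factorial j : ℚ) * (Nat.choose (n+1) (j+1) : ℚ)) := by
    have := lhs_eq n p
    have hc : ((∑ k ∈ Finset.Icc 1 (n+1), k ^ p : ℕ) : ℚ)
        = ((∑ j ∈ Finset.range (p+1), stirlingSecond (p+1) (j+1) * (Nat.factorial j * Nat.choose (n+1) (j+1)) : ℕ) : ℚ) := by
      exact_mod_cast congrArg (Nat.cast (R := ℚ)) this
    push_cast at hc
    exact hc
  -- per-term rewrite of RHS using lah
  have key : ∀ j, (Nat.factorial j : ℚ) ^ 2 * (stirlingSecond (p + 1) (j + 1) : ℚ) *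
      (∑ k ∈ Finset.Icc j n, (stirlingFirst (n + 1) (k + 1) : ℚ) *
        (stirlingSecond (k + 1) (j + 1) : ℚ))
      = (Nat.factorial n : ℚ) * ((stirlingSecond (p+1) (j+1) : ℚ) *
          ((Nat.factorial j : ℚ) * (Nat.choose (n+1) (j+1) : ℚ))) := by
    intro j
    have h1 : (∑ k ∈ Finset.Icc j n, (stirlingFirst (n + 1) (k + 1) : ℚ) *
        (stirlingSecond (k + 1) (j + 1) : ℚ)) * ((j+1) * (Nat.factorial j : ℚ))
        = (Nat.choose n j : ℚ) * ((n+1) * (Nat.factorial n : ℚ)) := by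
      have := lah n j
      have hc : ((( ∑ k ∈ Finset.Icc j n, stirlingFirst (n+1) (k+1) * stirlingSecond (k+1) (j+1)) * Nat.factorial (j+1) : ℕ) : ℚ)
          = ((Nat.choose n j * Nat.factorial (n+1) : ℕ) : ℚ) := by
        exact_mod_cast congrArg (Nat.cast (R := ℚ)) this
      rw [Nat.factorial_succ j, Nat.factorial_succ n] at hc
      push_cast at hc
      exact hc
    have h2 : ((n:ℚ)+1) * (Nat.choose n j : ℚ) = (Nat.choose (n+1) (j+1) : ℚ) * ((j:ℚ)+1) := by
      exact_mod_cast congrArg (Nat.cast (R := ℚ)) (Nat.add_one_mul_choose_eq n j)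
    have hj0 : ((j:ℚ)+1) ≠ 0 := by positivity
    refine mul_left_cancel₀ hj0 ?_
    linear_combination ((Nat.factorial j : ℚ) * (stirlingSecond (p+1) (j+1) : ℚ)) * h1
      + ((Nat.factorial j : ℚ) * (stirlingSecond (p+1) (j+1) : ℚ) * (Nat.factorial n : ℚ)) * h2
  rw [hL]
  rw [Finset.sum_congr rfl (fun j _ => key j), ← Finset.mul_sum]
  rw [one_div, inv_mul_cancel_left₀ hn0]
  -- bridge ranges
  set g : ℕ → ℚ := fun j => (stirlingSecond (p+1) (j+1) : ℚ) *
    ((Nat.factorial j : ℚ) * (Nat.choose (n+1) (j+1) : ℚ)) with hg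
  have hbig1 : ∑ j ∈ Finset.range (p+1), g j = ∑ j ∈ Finset.range (n+p+2), g j := by
    refine Finset.sum_subset (fun x hx => by simp only [Finset.mem_range] at *; omega) ?_
    intro x hx hx2
    simp only [Finset.mem_range, not_lt] at hx hx2
    rw [hg]
    simp only
    rw [sS_eq_zero (p+1) (x+1) (by omega)]
    simp
  have hbig2 : ∑ j ∈ Finset.range (n+1), g j = ∑ j ∈ Finset.range (n+p+2), g j := by
    refine Finset.sum_subset (fun x hx => by simp only [Finset.mem_range] at *; omega) ?_
    intro x hx hx2
    simp only [Finset.mem_range, not_lt] at hx hx2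
    rw [hg]
    simp only
    rw [Nat.choose_eq_zero_of_lt (by omega)]
    simp
  rw [hbig1, ← hbig2]
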